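/- Let H = ℂ^d and fix a decomposition ℂ^d ≅ ⊕_{α∈V} H_{α_l} ⊗ H_{α_r}. For each pair (α,β) ∈ V×V let Q_{α_r,β_l} be a projection on H_{α_r} ⊗ H_{β_l}, and for j ∈ ℤ/N define the projection P_{j,j+1} on (ℂ^d)^{⊗N} acting on sites j, j+1 as Σ_{α,β} I_{α_l^j} ⊗ Q_{α_r^j, β_l^{j+1}} ⊗ I_{β_r^{j+1}} (block-diagonally with respect to the decomposition, identity on all other sites). Then ker(Σ_{j∈ℤ/N} P_{j,j+1}) = ⊕_{(α^1,...,α^N)} ⊗_{j=1}^N ker Q_{α_r^j, α_l^{j+1}}, where the direct sum is over all functions (α^1,...,α^N) ∈ V^N and indices on j are mod N. -/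

import Mathlib

open Matrix

variable {V : Type*} [DecidableEq V]

/-- transport along an equality of vertices, left dimensions. -/
def castL (dl : V → ℕ) {α β : V} (h : α = β) (i : Fin (dl β)) : Fin (dl α) :=
  cast (by rw [h]) i

/-- transport along an equality of vertices, right dimensions. -/
def castR (dr : V → ℕ) {α β : V} (h : α = β) (i : Fin (dr β)) : Fin (dr α) :=
  cast (by rw [h]) i

/-- the single-site index set, realizing `ℂ^d ≅ ⊕_{α ∈ V} H_{α_l} ⊗ H_{α_r}`
where `dim H_{α_l} = dl α` and `dim H_{α_r} = dr α`. -/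
def Site (V : Type*) (dl dr : V → ℕ) : Type _ := Σ α : V, Fin (dl α) × Fin (dr α)

variable [Fintype V]

instance (dl dr : V → ℕ) : Fintype (Site V dl dr) := by unfold Site; infer_instance
instance (dl dr : V → ℕ) : DecidableEq (Site V dl dr) := by unfold Site; infer_instance

/-- the local term `P_{j,j+1}` of the block-diagonal Hamiltonian on the periodic chain
of `N` qudits: it preserves the decomposition of each site, acts as the identity on all
sites other than `j, j+1` and on the factors `H_{α_l}` of site `j` and `H_{β_r}` of site
`j+1`, and acts as `Q α β` on `H_{α_r} ⊗ H_{β_l}` (for the blocks `α` at `j`, `β` at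
`j+1`). -/
noncomputable def Pblock (V : Type*) [Fintype V] [DecidableEq V] (dl dr : V → ℕ)
    (Q : ∀ α β : V, Matrix (Fin (dr α) × Fin (dl β)) (Fin (dr α) × Fin (dl β)) ℂ)
    (N : ℕ) [NeZero N] (j : ZMod N) :
    Matrix (ZMod N → Site V dl dr) (ZMod N → Site V dl dr) ℂ :=
  Matrix.of fun x y =>
    (if ∀ i, i ≠ j → i ≠ j + 1 → x i = y i then (1 : ℂ) else 0) *
    (if h : (x j).1 = (y j).1 ∧ (x (j + 1)).1 = (y (j + 1)).1 then
      (if (x j).2.1 = castL dl h.1 (y j).2.1 ∧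
          (x (j + 1)).2.2 = castR dr h.2 (y (j + 1)).2.2 then
        Q (x j).1 (x (j + 1)).1 ((x j).2.2, (x (j + 1)).2.1)
          (castR dr h.1 (y j).2.2, castL dl h.2 (y (j + 1)).2.1)
      else 0)
    else 0)

/-- the block-diagonal Hamiltonian `H_N = Σ_{j ∈ ℤ/N} P_{j,j+1}`. -/
noncomputable def Hblock (V : Type*) [Fintype V] [DecidableEq V] (dl dr : V → ℕ)
    (Q : ∀ α β : V, Matrix (Fin (dr α) × Fin (dl β)) (Fin (dr α) × Fin (dl β)) ℂ)
    (N : ℕ) [NeZero N] :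
    Matrix (ZMod N → Site V dl dr) (ZMod N → Site V dl dr) ℂ :=
  ∑ j, Pblock V dl dr Q N j

/-- the elementary product vector `⊗_j f_j` lying in the summand of `((ℂ^d)^{⊗N}`
labelled by the block configuration `a : ℤ/N → V`, where
`f j ∈ H_{(a j)_r} ⊗ H_{(a (j+1))_l}`. -/
noncomputable def prodVec (V : Type*) [DecidableEq V] (dl dr : V → ℕ) (N : ℕ) [NeZero N]
    (a : ZMod N → V)
    (f : ∀ j : ZMod N, Fin (dr (a j)) × Fin (dl (a (j + 1))) → ℂ) :
    (ZMod N → Site V dl dr) → ℂ :=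
  fun x =>
    if h : ∀ j, (x j).1 = a j then
      ∏ j, f j (castR dr (h j).symm (x j).2.2, castL dl (h (j + 1)).symm (x (j + 1)).2.1)
    else 0

set_option linter.unusedSectionVars false

namespace Aux13

lemma castL_eq {dl : V → ℕ} {α β : V} (h : α = β) {i : Fin (dl β)} {i' : Fin (dl α)}
    (hh : HEq i i') : castL dl h i = i' := by subst h; exact eq_of_heq hh

lemma castR_eq {dr : V → ℕ} {α β : V} (h : α = β) {i : Fin (dr β)} {i' : Fin (dr α)}
    (hh : HEq i i') : castR dr h i = i' := by subst h; exact eq_of_heq hh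

lemma heq_castL {dl : V → ℕ} {α β : V} (h : α = β) (i : Fin (dl β)) :
    HEq (castL dl h i) i := by subst h; rfl

lemma heq_castR {dr : V → ℕ} {α β : V} (h : α = β) (i : Fin (dr β)) :
    HEq (castR dr h i) i := by subst h; rfl

lemma heq_app {κ : Type*} {π : κ → Sort*} (b : ∀ j, π j) {i i' : κ} (e : i = i') :
    HEq (b i) (b i') := by subst e; rfl

lemma site_ext {dl dr : V → ℕ} {α β : V} {p : Fin (dl α) × Fin (dr α)} {q : Fin (dl β) × Fin (dr β)}
    (h : α = β) (h1 : HEq p.1 q.1) (h2 : HEq p.2 q.2) :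
    (⟨α, p⟩ : Site V dl dr) = ⟨β, q⟩ := by
  subst h
  exact congrArg _ (Prod.ext (eq_of_heq h1) (eq_of_heq h2))

lemma site_heq21 {dl dr : V → ℕ} {s t : Site V dl dr} (e : s = t) : HEq s.2.1 t.2.1 := by
  subst e; rfl
lemma site_heq22 {dl dr : V → ℕ} {s t : Site V dl dr} (e : s = t) : HEq s.2.2 t.2.2 := by
  subst e; rfl

variable (dl dr : V → ℕ) (N : ℕ) [NeZero N]

/-- bond index spaces for a block configuration `a`. -/
abbrev BondT (a : ZMod N → V) (j : ZMod N) : Type _ := Fin (dr (a j)) × Fin (dl (a (j + 1)))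

abbrev Bond (a : ZMod N → V) : Type _ := ∀ j : ZMod N, BondT dl dr N a j

/-- reconstruct a site configuration from a block configuration and bond indices. -/
def toIdx (a : ZMod N → V) (b : Bond dl dr N a) : ZMod N → Site V dl dr :=
  fun j => ⟨a j, (castL dl (congrArg a (sub_add_cancel j 1)).symm (b (j - 1)).2, (b j).1)⟩

/-- extract bond indices from a site configuration lying in sector `a`. -/
def bnd (a : ZMod N → V) (x : ZMod N → Site V dl dr) (h : ∀ j, (x j).1 = a j) :
    Bond dl dr N a :=
  fun j => (castR dr (h j).symm (x j).2.2, castL dl (h (j + 1)).symm (x (j + 1)).2.1)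

/-- inclusion of the sector `a` function space. -/
noncomputable def Phi (a : ZMod N → V) :
    (Bond dl dr N a → ℂ) →ₗ[ℂ] ((ZMod N → Site V dl dr) → ℂ) where
  toFun g := fun x => if h : ∀ j, (x j).1 = a j then g (bnd dl dr N a x h) else 0
  map_add' g g' := by
    funext x; by_cases h : ∀ j, (x j).1 = a j <;> simp [h]
  map_smul' c g := by
    funext x; by_cases h : ∀ j, (x j).1 = a j <;> simp [h]

lemma toIdx_fst (a : ZMod N → V) (b : Bond dl dr N a) (j : ZMod N) :
    (toIdx dl dr N a b j).1 = a j := rfl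

lemma bnd_toIdx (a : ZMod N → V) (b : Bond dl dr N a) (h : ∀ j, (toIdx dl dr N a b j).1 = a j) :
    bnd dl dr N a (toIdx dl dr N a b) h = b := by
  funext j
  simp only [bnd, toIdx]
  refine Prod.ext ?_ ?_ <;> dsimp only
  · exact castR_eq (dr := dr) _ HEq.rfl
  · refine castL_eq (dl := dl) _ ?_
    refine HEq.trans (heq_castL (dl := dl) _ _) ?_
    exact heq_app (fun k => (b k).2) (add_sub_cancel_right j 1)

lemma toIdx_bnd (a : ZMod N → V) (x : ZMod N → Site V dl dr) (h : ∀ j, (x j).1 = a j) :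
    toIdx dl dr N a (bnd dl dr N a x h) = x := by
  funext j
  simp only [bnd, toIdx]
  refine site_ext (h j).symm ?_ ?_ <;> dsimp only
  · refine HEq.trans (heq_castL (dl := dl) _ _) ?_
    refine HEq.trans (heq_castL (dl := dl) _ _) ?_
    exact heq_app (fun k => (x k).2.1) (sub_add_cancel j 1)
  · exact heq_castR (dr := dr) _ _

lemma Phi_apply (a : ZMod N → V) (g : Bond dl dr N a → ℂ) (x : ZMod N → Site V dl dr) :
    Phi dl dr N a g x = if h : ∀ j, (x j).1 = a j then g (bnd dl dr N a x h) else 0 := rfl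

lemma Phi_toIdx (a : ZMod N → V) (g : Bond dl dr N a → ℂ) (b : Bond dl dr N a) :
    Phi dl dr N a g (toIdx dl dr N a b) = g b := by
  rw [Phi_apply, dif_pos (show ∀ j, (toIdx dl dr N a b j).1 = a j from fun j => rfl)]
  exact congrArg g (bnd_toIdx dl dr N a b _)

lemma Phi_toIdx_ne (a a' : ZMod N → V) (g : Bond dl dr N a' → ℂ) (b : Bond dl dr N a)
    (hne : a' ≠ a) : Phi dl dr N a' g (toIdx dl dr N a b) = 0 := by
  rw [Phi_apply, dif_neg]
  intro hc
  exact hne (funext fun j => (hc j).symm.trans (toIdx_fst dl dr N a b j))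

lemma decomp (v : (ZMod N → Site V dl dr) → ℂ) :
    ∑ a : ZMod N → V, Phi dl dr N a (fun b => v (toIdx dl dr N a b)) = v := by
  funext x
  rw [Finset.sum_apply]
  rw [Finset.sum_eq_single (fun j => (x j).1)]
  · rw [Phi_apply, dif_pos (show ∀ j, (x j).1 = (fun k => (x k).1) j from fun j => rfl)]
    exact congrArg v (toIdx_bnd dl dr N _ x _)
  · intro a _ hne
    rw [Phi_apply, dif_neg]
    intro hc
    exact hne (funext fun j => (hc j).symm)
  · intro hn
    exact absurd (Finset.mem_univ _) hn


section Op
variable (Q : ∀ α β : V, Matrix (Fin (dr α) × Fin (dl β)) (Fin (dr α) × Fin (dl β)) ℂ)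

/-- update the bond-(j) components of a site configuration. -/
def updB (j : ZMod N) (x : ZMod N → Site V dl dr)
    (c : Fin (dr (x j).1) × Fin (dl (x (j + 1)).1)) : ZMod N → Site V dl dr :=
  Function.update (Function.update x j ⟨(x j).1, ((x j).2.1, c.1)⟩) (j + 1)
    ⟨(x (j + 1)).1, (c.2, (x (j + 1)).2.2)⟩

variable {dl dr N}

lemma updB_self {j : ZMod N} (hj : j + 1 ≠ j) (x : ZMod N → Site V dl dr) (c) :
    updB dl dr N j x c j = ⟨(x j).1, ((x j).2.1, c.1)⟩ := by
  unfold updB; erw [Function.update_of_ne hj.symm, Function.update_self]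

lemma updB_succ {j : ZMod N} (x : ZMod N → Site V dl dr) (c) :
    updB dl dr N j x c (j + 1) = ⟨(x (j + 1)).1, (c.2, (x (j + 1)).2.2)⟩ := by
  unfold updB; erw [Function.update_self]

lemma updB_ne {j : ZMod N} (x : ZMod N → Site V dl dr) (c) (i : ZMod N)
    (h1 : i ≠ j) (h2 : i ≠ j + 1) : updB dl dr N j x c i = x i := by
  unfold updB; erw [Function.update_of_ne h2, Function.update_of_ne h1]

lemma updB_fst {j : ZMod N} (hj : j + 1 ≠ j) (x : ZMod N → Site V dl dr) (c) (i : ZMod N) :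
    (updB dl dr N j x c i).1 = (x i).1 := by
  by_cases h1 : i = j
  · subst h1; rw [updB_self hj]
  · by_cases h2 : i = j + 1
    · subst h2; rw [updB_succ]
    · rw [updB_ne x c i h1 h2]

lemma P_updB {j : ZMod N} (hj : j + 1 ≠ j) (x : ZMod N → Site V dl dr) (c) :
    Pblock V dl dr Q N j x (updB dl dr N j x c) =
      Q (x j).1 (x (j + 1)).1 ((x j).2.2, (x (j + 1)).2.1) c := by
  have e1 := updB_self (x := x) (c := c) hj
  have e2 := updB_succ (x := x) (c := c) (j := j)
  have hC : (x j).1 = (updB dl dr N j x c j).1 ∧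
      (x (j + 1)).1 = (updB dl dr N j x c (j + 1)).1 :=
    ⟨by rw [e1], by rw [e2]⟩
  show (if _ then (1:ℂ) else 0) * _ = _
  rw [if_pos (fun i h1 h2 => (updB_ne x c i h1 h2).symm), one_mul, dif_pos hC,
    if_pos ⟨(castL_eq (dl := dl) hC.1 ((site_heq21 e1).trans HEq.rfl)).symm,
            (castR_eq (dr := dr) hC.2 ((site_heq22 e2).trans HEq.rfl)).symm⟩]
  congr 1
  refine Prod.ext ?_ ?_ <;> dsimp only
  · exact castR_eq (dr := dr) hC.1 (site_heq22 e1)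
  · exact castL_eq (dl := dl) hC.2 (site_heq21 e2)

lemma P_eq_zero {j : ZMod N} (hj : j + 1 ≠ j) (x y : ZMod N → Site V dl dr)
    (hne : ∀ c, y ≠ updB dl dr N j x c) : Pblock V dl dr Q N j x y = 0 := by
  by_contra hP
  have : Pblock V dl dr Q N j x y =
      (if ∀ i, i ≠ j → i ≠ j + 1 → x i = y i then (1 : ℂ) else 0) * _ := rfl
  rw [this] at hP
  rcases Classical.em (∀ i, i ≠ j → i ≠ j + 1 → x i = y i) with hoff | hoff
  swap
  · exact hP (by rw [if_neg hoff, zero_mul])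
  rw [if_pos hoff, one_mul] at hP
  rcases Classical.em ((x j).1 = (y j).1 ∧ (x (j + 1)).1 = (y (j + 1)).1) with hC | hC
  swap
  · exact hP (dif_neg hC)
  rw [dif_pos hC] at hP
  rcases Classical.em ((x j).2.1 = castL dl hC.1 (y j).2.1 ∧
      (x (j + 1)).2.2 = castR dr hC.2 (y (j + 1)).2.2) with hI | hI
  swap
  · exact hP (if_neg hI)
  refine hne (castR dr hC.1 (y j).2.2, castL dl hC.2 (y (j + 1)).2.1) ?_
  funext i
  by_cases h1 : i = j
  · rw [h1, updB_self hj]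
    refine site_ext hC.1.symm ?_ ?_ <;> dsimp only
    · have hh := heq_castL (dl := dl) hC.1 ((y j).2.1)
      rw [← hI.1] at hh
      exact hh.symm
    · exact (heq_castR (dr := dr) hC.1 _).symm
  · by_cases h2 : i = j + 1
    · rw [h2, updB_succ]
      refine site_ext hC.2.symm ?_ ?_ <;> dsimp only
      · exact (heq_castL (dl := dl) hC.2 _).symm
      · have hh := heq_castR (dr := dr) hC.2 (y (j + 1)).2.2
        rw [← hI.2] at hh
        exact hh.symm
    · rw [updB_ne x _ i h1 h2]
      exact (hoff i h1 h2).symm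

lemma updB_inj {j : ZMod N} (hj : j + 1 ≠ j) (x : ZMod N → Site V dl dr) :
    Function.Injective (updB dl dr N j x) := by
  intro c c' h
  have h1 := congrFun h j
  have h2 := congrFun h (j + 1)
  rw [updB_self hj, updB_self hj] at h1
  rw [updB_succ, updB_succ] at h2
  refine Prod.ext ?_ ?_
  · have := site_heq22 h1
    exact eq_of_heq this
  · have := site_heq21 h2
    exact eq_of_heq this

lemma Pblock_mulVec {j : ZMod N} (hj : j + 1 ≠ j) (v : (ZMod N → Site V dl dr) → ℂ)
    (x : ZMod N → Site V dl dr) :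
    (Pblock V dl dr Q N j).mulVec v x =
      ∑ c : Fin (dr (x j).1) × Fin (dl (x (j + 1)).1),
        Q (x j).1 (x (j + 1)).1 ((x j).2.2, (x (j + 1)).2.1) c * v (updB dl dr N j x c) := by
  have : (Pblock V dl dr Q N j).mulVec v x =
      ∑ y, Pblock V dl dr Q N j x y * v y := rfl
  rw [this]
  rw [← Finset.sum_subset (Finset.subset_univ
    ((Finset.univ : Finset (Fin (dr (x j).1) × Fin (dl (x (j + 1)).1))).image
      (fun c => updB dl dr N j x c)))
    (fun y _ hy => ?_), Finset.sum_image (fun c _ c' _ h => updB_inj hj x h)]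
  · refine Finset.sum_congr rfl fun c _ => ?_
    rw [P_updB Q hj]
  · rw [P_eq_zero Q hj x y, zero_mul]
    intro c hc
    exact hy (Finset.mem_image.2 ⟨c, Finset.mem_univ c, hc.symm⟩)

end Op


section Op2
variable {dl dr : V → ℕ} {N : ℕ} [NeZero N]
variable (Q : ∀ α β : V, Matrix (Fin (dr α) × Fin (dl β)) (Fin (dr α) × Fin (dl β)) ℂ)

/-- apply `Q` at bond slot `j` within sector `a`. -/
noncomputable def opK (a : ZMod N → V) (j : ZMod N) (g : Bond dl dr N a → ℂ) :
    Bond dl dr N a → ℂ :=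
  fun b => ∑ c, Q (a j) (a (j + 1)) (b j) c * g (Function.update b j c)

def pairCast {α α' β β' : V} (h1 : α = α') (h2 : β = β') :
    (Fin (dr α) × Fin (dl β)) ≃ (Fin (dr α') × Fin (dl β')) :=
  Equiv.prodCongr (finCongr (congrArg dr h1)) (finCongr (congrArg dl h2))

lemma pairCast_eq {α α' β β' : V} (h1 : α = α') (h2 : β = β') (p : Fin (dr α) × Fin (dl β)) :
    pairCast (dl := dl) (dr := dr) h1 h2 p = (castR dr h1.symm p.1, castL dl h2.symm p.2) := by
  subst h1; subst h2; rfl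

lemma Q_cast {α α' β β' : V} (h1 : α = α') (h2 : β = β') (u w : Fin (dr α) × Fin (dl β)) :
    Q α β u w = Q α' β' (pairCast (dl := dl) (dr := dr) h1 h2 u) (pairCast h1 h2 w) := by
  subst h1; subst h2; rfl

lemma updB_heq22 {j : ZMod N} (x : ZMod N → Site V dl dr) (c) (i : ZMod N) (h1 : i ≠ j) :
    HEq ((updB dl dr N j x c i).2.2) ((x i).2.2) := by
  by_cases h2 : i = j + 1
  · rw [h2]; have hh := site_heq22 (dl := dl) (dr := dr) (updB_succ x c); exact hh
  · exact site_heq22 (updB_ne x c i h1 h2)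

lemma updB_heq21 {j : ZMod N} (hj : j + 1 ≠ j) (x : ZMod N → Site V dl dr) (c) (i : ZMod N)
    (h2 : i ≠ j + 1) : HEq ((updB dl dr N j x c i).2.1) ((x i).2.1) := by
  by_cases h1 : i = j
  · rw [h1]; have hh := site_heq21 (dl := dl) (dr := dr) (updB_self hj x c); exact hh
  · exact site_heq21 (updB_ne x c i h1 h2)

lemma bnd_updB {j : ZMod N} (hj : j + 1 ≠ j) (a : ZMod N → V) (x : ZMod N → Site V dl dr)
    (h : ∀ i, (x i).1 = a i) (c) (h' : ∀ i, (updB dl dr N j x c i).1 = a i) :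
    bnd dl dr N a (updB dl dr N j x c) h' =
      Function.update (bnd dl dr N a x h) j (pairCast (dl := dl) (dr := dr) (h j) (h (j + 1)) c) := by
  funext i
  by_cases hi : i = j
  · rw [hi, Function.update_self, pairCast_eq]
    simp only [bnd]
    refine Prod.ext ?_ ?_ <;> dsimp only <;> apply eq_of_heq
    · refine ((heq_castR (dr := dr) _ _).trans ?_).trans (heq_castR (dr := dr) _ _).symm
      exact site_heq22 (updB_self hj x c)
    · refine ((heq_castL (dl := dl) _ _).trans ?_).trans (heq_castL (dl := dl) _ _).symm
      exact site_heq21 (updB_succ x c)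
  · rw [Function.update_of_ne hi]
    simp only [bnd]
    refine Prod.ext ?_ ?_ <;> dsimp only <;> apply eq_of_heq
    · refine ((heq_castR (dr := dr) _ _).trans ?_).trans (heq_castR (dr := dr) _ _).symm
      exact updB_heq22 x c i hi
    · refine ((heq_castL (dl := dl) _ _).trans ?_).trans (heq_castL (dl := dl) _ _).symm
      exact updB_heq21 hj x c (i + 1) (fun hh => hi (add_right_cancel hh))

lemma Pblock_Phi {j : ZMod N} (hj : ∀ i : ZMod N, i + 1 ≠ i) (a : ZMod N → V)
    (g : Bond dl dr N a → ℂ) :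
    (Pblock V dl dr Q N j).mulVec (Phi dl dr N a g) = Phi dl dr N a (opK Q a j g) := by
  funext x
  rw [Pblock_mulVec Q (hj j)]
  by_cases h : ∀ i, (x i).1 = a i
  · rw [Phi_apply, dif_pos h]
    have hterm : ∀ c, Q (x j).1 (x (j + 1)).1 ((x j).2.2, (x (j + 1)).2.1) c *
        Phi dl dr N a g (updB dl dr N j x c) =
        Q (a j) (a (j + 1)) (bnd dl dr N a x h j) (pairCast (dl := dl) (dr := dr) (h j) (h (j + 1)) c) *
          g (Function.update (bnd dl dr N a x h) j (pairCast (dl := dl) (dr := dr) (h j) (h (j + 1)) c)) := by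
      intro c
      have h' : ∀ i, (updB dl dr N j x c i).1 = a i :=
        fun i => (updB_fst (hj j) x c i).trans (h i)
      rw [Phi_apply, dif_pos h', bnd_updB (hj j) a x h c h']
      congr 1
      rw [Q_cast Q (h j) (h (j + 1)) _ c]
      congr 1
      rw [pairCast_eq]
      rfl
    rw [Finset.sum_congr rfl (fun c _ => hterm c)]
    exact Fintype.sum_equiv (pairCast (dl := dl) (dr := dr) (h j) (h (j + 1)))
      _ _ (fun c => rfl)
  · rw [Phi_apply, dif_neg h]
    refine Finset.sum_eq_zero fun c _ => ?_
    rw [Phi_apply, dif_neg, mul_zero]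
    intro h'
    exact h fun i => (updB_fst (hj j) x c i).symm.trans (h' i)

end Op2


section Sector
open scoped ComplexOrder
variable {dl dr : V → ℕ} {N : ℕ} [NeZero N]
variable (Q : ∀ α β : V, Matrix (Fin (dr α) × Fin (dl β)) (Fin (dr α) × Fin (dl β)) ℂ)

lemma sp_symm_same (a : ZMod N → V) (i : ZMod N) (c : BondT dl dr N a i)
    (r : ∀ j : {j // j ≠ i}, BondT dl dr N a j) :
    (Equiv.piSplitAt i (BondT dl dr N a)).symm (c, r) i = c := by
  simp [Equiv.piSplitAt]

lemma sp_symm_ne (a : ZMod N → V) (i : ZMod N) (c : BondT dl dr N a i)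
    (r : ∀ j : {j // j ≠ i}, BondT dl dr N a j) (j : ZMod N) (h : j ≠ i) :
    (Equiv.piSplitAt i (BondT dl dr N a)).symm (c, r) j = r ⟨j, h⟩ := by
  simp [Equiv.piSplitAt, h]

lemma sp_update (a : ZMod N → V) (i : ZMod N) (c c' : BondT dl dr N a i)
    (r : ∀ j : {j // j ≠ i}, BondT dl dr N a j) :
    Function.update ((Equiv.piSplitAt i (BondT dl dr N a)).symm (c, r)) i c' =
      (Equiv.piSplitAt i (BondT dl dr N a)).symm (c', r) := by
  funext j
  by_cases h : j = i
  · subst h; rw [Function.update_self, sp_symm_same]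
  · rw [Function.update_of_ne h, sp_symm_ne a i c r j h, sp_symm_ne a i c' r j h]

lemma sum_split (a : ZMod N → V) (i : ZMod N) (F : Bond dl dr N a → ℂ) :
    ∑ b, F b = ∑ r : ∀ j : {j // j ≠ i}, BondT dl dr N a j, ∑ c : BondT dl dr N a i,
      F ((Equiv.piSplitAt i (BondT dl dr N a)).symm (c, r)) := by
  calc ∑ b, F b = ∑ p : BondT dl dr N a i × ∀ j : {j // j ≠ i}, BondT dl dr N a j,
      F ((Equiv.piSplitAt i (BondT dl dr N a)).symm p) :=
        (Equiv.sum_comp (Equiv.piSplitAt i (BondT dl dr N a)).symm F).symm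
  _ = ∑ c, ∑ r, F ((Equiv.piSplitAt i (BondT dl dr N a)).symm (c, r)) :=
        Fintype.sum_prod_type _
  _ = _ := Finset.sum_comm

variable (hQherm : ∀ α β, (Q α β).IsHermitian) (hQidem : ∀ α β, Q α β * Q α β = Q α β)

include hQherm hQidem in
lemma Qpsd (α β : V) : (Q α β).PosSemidef := by
  have h := Matrix.posSemidef_conjTranspose_mul_self (Q α β)
  rwa [hQherm α β, hQidem α β] at h

include hQherm hQidem in
lemma quad_zero {α β : V} (f : Fin (dr α) × Fin (dl β) → ℂ)
    (h : star f ⬝ᵥ (Q α β) *ᵥ f = 0) : (Q α β) *ᵥ f = 0 := by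
  have h2 : star ((Q α β) *ᵥ f) ⬝ᵥ ((Q α β) *ᵥ f) = 0 := by
    rw [Matrix.star_mulVec, ← Matrix.dotProduct_mulVec, Matrix.mulVec_mulVec,
      hQherm α β, hQidem α β, h]
  exact dotProduct_star_self_eq_zero.mp h2

lemma opK_symm_eval (a : ZMod N → V) (j : ZMod N) (g : Bond dl dr N a → ℂ)
    (c : BondT dl dr N a j) (r : ∀ i : {i // i ≠ j}, BondT dl dr N a i) :
    opK Q a j g ((Equiv.piSplitAt j (BondT dl dr N a)).symm (c, r)) =
      (Q (a j) (a (j + 1))).mulVec (fun c' => g ((Equiv.piSplitAt j (BondT dl dr N a)).symm (c', r))) c := by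
  unfold opK
  rw [show ((Equiv.piSplitAt j (BondT dl dr N a)).symm (c, r)) j = c from sp_symm_same a j c r]
  refine Finset.sum_congr rfl fun c' _ => ?_
  rw [sp_update a j c c' r]

include hQherm hQidem in
lemma sector_ker (a : ZMod N → V) (g : Bond dl dr N a → ℂ)
    (hg : ∀ b, ∑ j, opK Q a j g b = 0) : ∀ j, opK Q a j g = 0 := by
  classical
  set f : ∀ j : ZMod N, (∀ i : {i // i ≠ j}, BondT dl dr N a i) → BondT dl dr N a j → ℂ :=
    fun j r c => g ((Equiv.piSplitAt j (BondT dl dr N a)).symm (c, r)) with hf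
  have hquad : ∀ j r, (0:ℂ) ≤ star (f j r) ⬝ᵥ (Q (a j) (a (j + 1))) *ᵥ (f j r) :=
    fun j r => (Qpsd Q hQherm hQidem _ _).dotProduct_mulVec_nonneg _
  have hdot : ∀ j, ∑ b, (starRingEnd ℂ) (g b) * opK Q a j g b =
      ∑ r, star (f j r) ⬝ᵥ (Q (a j) (a (j + 1))) *ᵥ (f j r) := by
    intro j
    rw [sum_split a j]
    refine Finset.sum_congr rfl fun r _ => ?_
    refine Finset.sum_congr rfl fun c _ => ?_
    rw [opK_symm_eval]
    rfl
  have htot : ∑ j, ∑ r, star (f j r) ⬝ᵥ (Q (a j) (a (j + 1))) *ᵥ (f j r) = 0 := by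
    rw [← Finset.sum_congr rfl (fun j _ => hdot j), Finset.sum_comm]
    refine Finset.sum_eq_zero fun b _ => ?_
    rw [← Finset.mul_sum, hg b, mul_zero]
  have hzero : ∀ j r, star (f j r) ⬝ᵥ (Q (a j) (a (j + 1))) *ᵥ (f j r) = 0 := by
    have h1 := (Finset.sum_eq_zero_iff_of_nonneg
      (fun j _ => Finset.sum_nonneg fun r _ => hquad j r)).mp htot
    intro j r
    exact (Finset.sum_eq_zero_iff_of_nonneg (fun r _ => hquad j r)).mp
      (h1 j (Finset.mem_univ j)) r (Finset.mem_univ r)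
  have hQf : ∀ j r, (Q (a j) (a (j + 1))) *ᵥ (f j r) = 0 :=
    fun j r => quad_zero Q hQherm hQidem _ (hzero j r)
  intro j
  funext b
  have hb : (Equiv.piSplitAt j (BondT dl dr N a)).symm
      ((Equiv.piSplitAt j (BondT dl dr N a)) b) = b :=
    Equiv.symm_apply_apply _ b
  rw [← hb]
  obtain ⟨c, r⟩ := (Equiv.piSplitAt j (BondT dl dr N a)) b
  rw [opK_symm_eval, hQf j r]
  rfl

end Sector


section Span
variable {dl dr : V → ℕ} {N : ℕ} [NeZero N]
variable (Q : ∀ α β : V, Matrix (Fin (dr α) × Fin (dl β)) (Fin (dr α) × Fin (dl β)) ℂ)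

noncomputable def kvec (a : ZMod N → V) (b : Bond dl dr N a) (j : ZMod N) :
    BondT dl dr N a j → ℂ :=
  fun c => (if c = b j then 1 else 0) - Q (a j) (a (j + 1)) c (b j)

lemma kvec_ker (hQidem : ∀ α β, Q α β * Q α β = Q α β) (a : ZMod N → V)
    (b : Bond dl dr N a) (j : ZMod N) :
    (Q (a j) (a (j + 1))).mulVec (kvec Q a b j) = 0 := by
  funext c'
  show ∑ c, Q (a j) (a (j + 1)) c' c * ((if c = b j then 1 else 0)
    - Q (a j) (a (j + 1)) c (b j)) = 0
  have : ∀ c, Q (a j) (a (j + 1)) c' c * ((if c = b j then 1 else 0)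
      - Q (a j) (a (j + 1)) c (b j)) =
      (if c = b j then Q (a j) (a (j + 1)) c' c else 0)
        - Q (a j) (a (j + 1)) c' c * Q (a j) (a (j + 1)) c (b j) := by
    intro c
    by_cases h : c = b j <;> simp [h, mul_sub]
  rw [Finset.sum_congr rfl fun c _ => this c, Finset.sum_sub_distrib,
    Finset.sum_ite_eq' Finset.univ (b j) (fun c => Q (a j) (a (j + 1)) c' c),
    if_pos (Finset.mem_univ _), ← Matrix.mul_apply, hQidem, sub_self]

lemma sector_repr (a : ZMod N → V) (g : Bond dl dr N a → ℂ)
    (hg : ∀ j, opK Q a j g = 0) (b' : Bond dl dr N a) :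
    g b' = ∑ b, g b * ∏ j, kvec Q a b j (b' j) := by
  classical
  have hexp : ∀ b, (∏ j, kvec Q a b j (b' j)) =
      ∑ t ∈ (Finset.univ : Finset (ZMod N)).powerset,
        (∏ j ∈ t, if b' j = b j then (1:ℂ) else 0) *
          ∏ j ∈ Finset.univ \ t, -Q (a j) (a (j + 1)) (b' j) (b j) := by
    intro b
    rw [← Finset.prod_add]
    refine Finset.prod_congr rfl fun j _ => ?_
    show kvec Q a b j (b' j) = _
    unfold kvec
    rw [sub_eq_add_neg]
  rw [Finset.sum_congr rfl fun b _ => congrArg (g b * ·) (hexp b)]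
  simp only [Finset.mul_sum]
  rw [Finset.sum_comm]
  rw [Finset.sum_eq_single (Finset.univ : Finset (ZMod N))]
  · simp only [Finset.sdiff_self, Finset.prod_empty, mul_one, Finset.prod_boole]
    rw [Finset.sum_eq_single b']
    · simp
    · intro b _ hne
      rw [if_neg, mul_zero]
      intro hc
      exact hne (funext fun j => hc j (Finset.mem_univ j)).symm
    · intro h; exact absurd (Finset.mem_univ _) h
  · intro t _ htne
    have hex : ∃ i, i ∉ t := by
      by_contra hc
      push_neg at hc
      exact htne (Finset.eq_univ_iff_forall.mpr hc)
    obtain ⟨i, hi⟩ := hex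
    have hi' : i ∈ Finset.univ \ t := Finset.mem_sdiff.mpr ⟨Finset.mem_univ i, hi⟩
    have hsplit : ∀ b : Bond dl dr N a,
        (∏ j ∈ Finset.univ \ t, -Q (a j) (a (j + 1)) (b' j) (b j)) =
        (-Q (a i) (a (i + 1)) (b' i) (b i)) *
          ∏ j ∈ (Finset.univ \ t).erase i, -Q (a j) (a (j + 1)) (b' j) (b j) :=
      fun b => (Finset.mul_prod_erase _ _ hi').symm
    rw [Finset.sum_congr rfl fun b _ => by rw [hsplit b]]
    rw [sum_split a i]
    refine Finset.sum_eq_zero fun r _ => ?_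
    set e := (Equiv.piSplitAt i (BondT dl dr N a)).symm with he
    have hA : ∀ c, (∏ j ∈ t, if b' j = (e (c, r)) j then (1:ℂ) else 0) =
        ∏ j ∈ t.attach, if b' j.1 = r ⟨j.1, fun hji => hi (hji ▸ j.2)⟩ then (1:ℂ) else 0 := by
      intro c
      rw [← Finset.prod_attach t]
      refine Finset.prod_congr rfl fun j _ => ?_
      rw [sp_symm_ne a i c r j.1 (fun hji => hi (hji ▸ j.2))]
    have hB : ∀ c, (∏ j ∈ (Finset.univ \ t).erase i, -Q (a j) (a (j + 1)) (b' j) ((e (c, r)) j)) =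
        ∏ j ∈ ((Finset.univ \ t).erase i).attach,
          -Q (a j.1) (a (j.1 + 1)) (b' j.1) (r ⟨j.1, (Finset.mem_erase.mp j.2).1⟩) := by
      intro c
      rw [← Finset.prod_attach ((Finset.univ \ t).erase i)]
      refine Finset.prod_congr rfl fun j _ => ?_
      rw [sp_symm_ne a i c r j.1 (Finset.mem_erase.mp j.2).1]
    have hterm : ∀ c, g (e (c, r)) *
        ((∏ j ∈ t, if b' j = (e (c, r)) j then (1:ℂ) else 0) *
          ((-Q (a i) (a (i + 1)) (b' i) ((e (c, r)) i)) *
            ∏ j ∈ (Finset.univ \ t).erase i, -Q (a j) (a (j + 1)) (b' j) ((e (c, r)) j))) =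
        -((∏ j ∈ t.attach, if b' j.1 = r ⟨j.1, fun hji => hi (hji ▸ j.2)⟩ then (1:ℂ) else 0) *
          (∏ j ∈ ((Finset.univ \ t).erase i).attach,
            -Q (a j.1) (a (j.1 + 1)) (b' j.1) (r ⟨j.1, (Finset.mem_erase.mp j.2).1⟩)) *
          (Q (a i) (a (i + 1)) (b' i) c * g (e (c, r)))) := by
      intro c
      rw [hA c, hB c, show (e (c, r)) i = c from sp_symm_same a i c r]
      ring
    rw [Finset.sum_congr rfl fun c _ => hterm c, Finset.sum_neg_distrib,
      ← Finset.mul_sum]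
    have hopk : ∑ c, Q (a i) (a (i + 1)) (b' i) c * g (e (c, r)) = 0 := by
      calc ∑ c, Q (a i) (a (i + 1)) (b' i) c * g (e (c, r))
          = opK Q a i g ((Equiv.piSplitAt i (BondT dl dr N a)).symm (b' i, r)) :=
            (opK_symm_eval Q a i g (b' i) r).symm
        _ = 0 := by rw [hg i]; rfl
    rw [hopk, mul_zero, neg_zero]
  · intro h; exact absurd (Finset.mem_powerset.mpr (Finset.Subset.refl _)) h

end Span


section Final
variable {dl dr : V → ℕ} {N : ℕ} [NeZero N]
variable (Q : ∀ α β : V, Matrix (Fin (dr α) × Fin (dl β)) (Fin (dr α) × Fin (dl β)) ℂ)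

lemma mulVec_sumv {n ι : Type*} [Fintype n] [Fintype ι] (M : Matrix n n ℂ) (w : ι → n → ℂ) :
    M *ᵥ (∑ a, w a) = ∑ a, M *ᵥ w a := by
  rw [← Matrix.mulVecLin_apply, map_sum]
  simp only [Matrix.mulVecLin_apply]

lemma sum_mulVecs {n ι : Type*} [Fintype n] [Fintype ι] (M : ι → Matrix n n ℂ) (w : n → ℂ) :
    (∑ j, M j) *ᵥ w = ∑ j, M j *ᵥ w := by
  funext x
  simp only [Matrix.mulVec, dotProduct, Matrix.sum_apply, Finset.sum_mul,
    Finset.sum_apply]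
  exact Finset.sum_comm

lemma opK_prod_zero (a : ZMod N → V) (f : ∀ j, BondT dl dr N a j → ℂ)
    (hf : ∀ j, (Q (a j) (a (j + 1))).mulVec (f j) = 0) (j : ZMod N) :
    opK Q a j (fun b => ∏ i, f i (b i)) = 0 := by
  funext b
  show ∑ c, Q (a j) (a (j + 1)) (b j) c * ∏ i, f i (Function.update b j c i) = 0
  have hP : ∀ c : BondT dl dr N a j, (∏ i, f i (Function.update b j c i)) =
      f j c * ∏ i ∈ Finset.univ.erase j, f i (b i) := by
    intro c
    rw [← Finset.mul_prod_erase Finset.univ _ (Finset.mem_univ j), Function.update_self]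
    congr 1
    refine Finset.prod_congr rfl fun i hi => ?_
    rw [Function.update_of_ne (Finset.mem_erase.mp hi).1]
  rw [Finset.sum_congr rfl fun c _ => by rw [hP c]]
  have hre : ∑ c, Q (a j) (a (j + 1)) (b j) c * (f j c * ∏ i ∈ Finset.univ.erase j, f i (b i)) =
      (∑ c, Q (a j) (a (j + 1)) (b j) c * f j c) * ∏ i ∈ Finset.univ.erase j, f i (b i) := by
    rw [Finset.sum_mul]
    exact Finset.sum_congr rfl fun c _ => by ring
  rw [hre]
  have h0 : ∑ c, Q (a j) (a (j + 1)) (b j) c * f j c = 0 := congrFun (hf j) (b j)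
  rw [h0, zero_mul]

end Final

end Aux13

/-- the kernel of the block-diagonal Hamiltonian
`H_N = Σ_{j∈ℤ/N} P_{j,j+1}` is `⊕_{(α^1,…,α^N)} ⊗_j ker Q_{α_r^j, α_l^{j+1}}`, i.e. the
span of the elementary product vectors built from configurations `a : ℤ/N → V` and
kernel vectors `f j ∈ ker Q_{(a j)_r, (a (j+1))_l}`. -/
theorem stmt_13 (V : Type*) [Fintype V] [DecidableEq V] (dl dr : V → ℕ)
    (Q : ∀ α β : V, Matrix (Fin (dr α) × Fin (dl β)) (Fin (dr α) × Fin (dl β)) ℂ)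
    (hQherm : ∀ α β, (Q α β).IsHermitian)
    (hQidem : ∀ α β, Q α β * Q α β = Q α β)
    (N : ℕ) [NeZero N] (hN : 2 ≤ N) :
    LinearMap.ker (Hblock V dl dr Q N).mulVecLin
      = Submodule.span ℂ {v : (ZMod N → Site V dl dr) → ℂ |
          ∃ (a : ZMod N → V)
            (f : ∀ j : ZMod N, Fin (dr (a j)) × Fin (dl (a (j + 1))) → ℂ),
            (∀ j, (Q (a j) (a (j + 1))).mulVec (f j) = 0) ∧
            v = prodVec V dl dr N a f} := by
  classical
  have hj : ∀ i : ZMod N, i + 1 ≠ i := by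
    haveI : Fact (1 < N) := ⟨hN⟩
    intro i h
    exact one_ne_zero (add_left_cancel (a := i) (b := (1 : ZMod N)) (c := 0)
      (by rw [add_zero]; exact h))
  apply le_antisymm
  · intro v hv
    rw [LinearMap.mem_ker, Matrix.mulVecLin_apply] at hv
    have hdec := Aux13.decomp dl dr N v
    set g : ∀ a : ZMod N → V, Aux13.Bond dl dr N a → ℂ :=
      fun a b => v (Aux13.toIdx dl dr N a b) with hg
    have hchain : (0 : (ZMod N → Site V dl dr) → ℂ) =
        ∑ a, Aux13.Phi dl dr N a (∑ j, Aux13.opK Q a j (g a)) := by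
      calc (0 : (ZMod N → Site V dl dr) → ℂ) = Hblock V dl dr Q N *ᵥ v := hv.symm
        _ = ∑ j, Pblock V dl dr Q N j *ᵥ v := Aux13.sum_mulVecs _ _
        _ = ∑ j, Pblock V dl dr Q N j *ᵥ (∑ a, Aux13.Phi dl dr N a (g a)) := by rw [hdec]
        _ = ∑ j, ∑ a, Pblock V dl dr Q N j *ᵥ Aux13.Phi dl dr N a (g a) := by
              refine Finset.sum_congr rfl fun j _ => ?_
              rw [Aux13.mulVec_sumv]
        _ = ∑ j, ∑ a, Aux13.Phi dl dr N a (Aux13.opK Q a j (g a)) := by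
              refine Finset.sum_congr rfl fun j _ => Finset.sum_congr rfl fun a _ => ?_
              rw [Aux13.Pblock_Phi Q hj a (g a)]
        _ = ∑ a, ∑ j, Aux13.Phi dl dr N a (Aux13.opK Q a j (g a)) := Finset.sum_comm
        _ = ∑ a, Aux13.Phi dl dr N a (∑ j, Aux13.opK Q a j (g a)) := by
              refine Finset.sum_congr rfl fun a _ => ?_
              rw [map_sum]
    have hsum0 : ∀ (a : ZMod N → V) (b : Aux13.Bond dl dr N a),
        ∑ j, Aux13.opK Q a j (g a) b = 0 := by
      intro a b
      have h1 := congrFun hchain (Aux13.toIdx dl dr N a b)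
      rw [Finset.sum_apply] at h1
      rw [Finset.sum_eq_single a] at h1
      · rw [Aux13.Phi_toIdx, Finset.sum_apply] at h1
        exact h1.symm
      · intro a' _ hne
        exact Aux13.Phi_toIdx_ne dl dr N a a' _ b hne
      · intro h; exact absurd (Finset.mem_univ _) h
    have hopK : ∀ a j, Aux13.opK Q a j (g a) = 0 :=
      fun a => Aux13.sector_ker Q hQherm hQidem a (g a) (hsum0 a)
    rw [← hdec]
    refine Submodule.sum_mem _ fun a _ => ?_
    have hrep : g a = ∑ b, g a b •
        (fun b' => ∏ j, Aux13.kvec Q a b j (b' j)) := by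
      funext b'
      rw [Finset.sum_apply]
      simp only [Pi.smul_apply, smul_eq_mul]
      exact Aux13.sector_repr Q a (g a) (hopK a) b'
    show Aux13.Phi dl dr N a (g a) ∈ _
    rw [hrep, map_sum]
    refine Submodule.sum_mem _ fun b _ => ?_
    rw [_root_.map_smul]
    refine Submodule.smul_mem _ _ (Submodule.subset_span ?_)
    exact ⟨a, Aux13.kvec Q a b, fun j => Aux13.kvec_ker Q hQidem a b j, rfl⟩
  · rw [Submodule.span_le]
    rintro v ⟨a, f, hf, rfl⟩
    simp only [SetLike.mem_coe, LinearMap.mem_ker, Matrix.mulVecLin_apply]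
    have hPv : prodVec V dl dr N a f = Aux13.Phi dl dr N a (fun b => ∏ j, f j (b j)) := rfl
    rw [hPv]
    show (∑ j, Pblock V dl dr Q N j) *ᵥ _ = 0
    rw [Aux13.sum_mulVecs]
    refine Finset.sum_eq_zero fun j _ => ?_
    rw [Aux13.Pblock_Phi Q hj a _, Aux13.opK_prod_zero Q a f hf j, map_zero]
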